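/- arXiv:1308.0708 — 4 statements merged into one kernel-verified Lean document; each statement's English description precedes it below -/
import Mathlib

section
/- Let H be a Hilbert space, A bounded self-adjoint, B bounded skew-adjoint on H, and let M = [[A, B], [-B, -A]] on H ⊕ H. If there exists λ > 0 such that A ≥ λ (or -A ≥ λ), then σ(M) ∩ (-λ, λ) = ∅. -/
set_option maxHeartbeats 1600000 in
/-- For `A` bounded self-adjoint and `B` bounded skew-adjoint on a Hilbert
space `H`, and `M = [[A, B], [-B, -A]]` on `H ⊕ H`: if there is `lam > 0` with `A ≥ lam`
or `-A ≥ lam` (in the quadratic-form sense), then `σ(M) ∩ (-lam, lam) = ∅`. -/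
theorem block_operator_spectral_gap
    {H : Type*} [NormedAddCommGroup H] [InnerProductSpace ℂ H] [CompleteSpace H]
    (A B : H →L[ℂ] H) (hA : IsSelfAdjoint A) (hB : ContinuousLinearMap.adjoint B = -B)
    (M : WithLp 2 (H × H) →L[ℂ] WithLp 2 (H × H))
    (hM : ∀ u v : H,
      M ((WithLp.prodContinuousLinearEquiv 2 ℂ H H).symm (u, v)) =
        (WithLp.prodContinuousLinearEquiv 2 ℂ H H).symm (A u + B v, -(B u) - A v))
    (lam : ℝ) (hlam : 0 < lam)
    (hbound : (∀ u : H, lam * ‖u‖ ^ 2 ≤ (inner ℂ u (A u) : ℂ).re) ∨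
      (∀ u : H, lam * ‖u‖ ^ 2 ≤ (inner ℂ u ((-A) u) : ℂ).re)) :
    spectrum ℂ M ∩ ((fun t : ℝ => (t : ℂ)) '' Set.Ioo (-lam) lam) = ∅ := by
  classical
  -- component formulas for M
  have hMf : ∀ w : WithLp 2 (H × H), (M w).fst = A w.fst + B w.snd := by
    intro w
    have h := hM w.fst w.snd
    have h1 : (WithLp.prodContinuousLinearEquiv 2 ℂ H H).symm (w.fst, w.snd) = w := rfl
    rw [h1] at h
    rw [h]; rfl
  have hMs : ∀ w : WithLp 2 (H × H), (M w).snd = -(B w.fst) - A w.snd := by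
    intro w
    have h := hM w.fst w.snd
    have h1 : (WithLp.prodContinuousLinearEquiv 2 ℂ H H).symm (w.fst, w.snd) = w := rfl
    rw [h1] at h
    rw [h]; rfl
  -- adjoint facts
  have hAsym : ∀ x y : H, (inner ℂ (A x) y : ℂ) = inner ℂ x (A y) := by
    intro x y
    conv_lhs => rw [← hA.adjoint_eq]
    exact ContinuousLinearMap.adjoint_inner_left A y x
  have hBsym : ∀ x y : H, (inner ℂ (B x) y : ℂ) = - inner ℂ x (B y) := by
    intro x y
    have h := ContinuousLinearMap.adjoint_inner_left B y x
    rw [hB] at h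
    simp only [ContinuousLinearMap.neg_apply, inner_neg_left] at h
    linear_combination -h
  -- M is self-adjoint
  have hMsa : IsSelfAdjoint M := by
    rw [ContinuousLinearMap.isSelfAdjoint_iff_isSymmetric]
    intro w z
    simp only [ContinuousLinearMap.coe_coe]
    rw [WithLp.prod_inner_apply, WithLp.prod_inner_apply]
    change inner ℂ (M w).fst z.fst + inner ℂ (M w).snd z.snd = inner ℂ w.fst (M z).fst + inner ℂ w.snd (M z).snd
    rw [hMf w, hMs w, hMf z, hMs z]
    simp only [inner_add_left, inner_add_right, inner_sub_left, inner_sub_right,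
      inner_neg_left, inner_neg_right]
    rw [hAsym w.fst z.fst, hBsym w.snd z.fst, hBsym w.fst z.snd, hAsym w.snd z.snd]
    ring
  rw [Set.eq_empty_iff_forall_notMem]
  rintro z ⟨hzspec, r, hrmem, rfl⟩
  obtain ⟨hr1, hr2⟩ := hrmem
  have habs : |r| < lam := abs_lt.mpr ⟨hr1, hr2⟩
  have hc : 0 < lam - |r| := by linarith
  set T : WithLp 2 (H × H) →L[ℂ] WithLp 2 (H × H) :=
    algebraMap ℂ (WithLp 2 (H × H) →L[ℂ] WithLp 2 (H × H)) (r : ℂ) - M with hT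
  -- lower bound
  have hlow : ∀ w : WithLp 2 (H × H), (lam - |r|) * ‖w‖ ≤ ‖T w‖ := by
    intro w
    set u := w.fst with hu
    set v := w.snd with hv
    have hTf : (T w).fst = (r : ℂ) • u - (A u + B v) := by
      simp only [hT, ContinuousLinearMap.sub_apply, Algebra.algebraMap_eq_smul_one,
        ContinuousLinearMap.smul_apply, ContinuousLinearMap.one_apply,
        WithLp.sub_fst, WithLp.smul_fst, hMf w]
      rfl
    have hTs : (T w).snd = (r : ℂ) • v + (B u + A v) := by
      simp only [hT, ContinuousLinearMap.sub_apply, Algebra.algebraMap_eq_smul_one,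
        ContinuousLinearMap.smul_apply, ContinuousLinearMap.one_apply,
        WithLp.sub_snd, WithLp.smul_snd, hMs w]
      abel
    set q : ℝ := (inner ℂ u (A u) : ℂ).re + (inner ℂ v (A v) : ℂ).re - r * (‖u‖ ^ 2 - ‖v‖ ^ 2)
      with hqdef
    have hBv : (inner ℂ v (B u) : ℂ) = -(starRingEnd ℂ) (inner ℂ u (B v)) := by
      rw [← inner_conj_symm v (B u), hBsym u v, map_neg]
    have huure : (inner ℂ u u : ℂ).re = ‖u‖ ^ 2 := by
      simpa using inner_self_eq_norm_sq (𝕜 := ℂ) u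
    have hvvre : (inner ℂ v v : ℂ).re = ‖v‖ ^ 2 := by
      simpa using inner_self_eq_norm_sq (𝕜 := ℂ) v
    have huuim : (inner ℂ u u : ℂ).im = 0 := by
      have := inner_self_im (𝕜 := ℂ) u
      rwa [RCLike.im_to_complex] at this
    have hvvim : (inner ℂ v v : ℂ).im = 0 := by
      have := inner_self_im (𝕜 := ℂ) v
      rwa [RCLike.im_to_complex] at this
    -- q expressed via T w
    have hq1 : q = (inner ℂ u (-(T w).fst) : ℂ).re + (inner ℂ v ((T w).snd) : ℂ).re := by
      rw [hTf, hTs, hqdef]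
      simp only [neg_sub, inner_sub_right, inner_add_right, inner_smul_right, hBv,
        Complex.add_re, Complex.sub_re, Complex.neg_re, Complex.mul_re,
        Complex.conj_re, Complex.conj_im, Complex.ofReal_re, Complex.ofReal_im,
        huure, hvvre, huuim, hvvim]
      ring
    -- bound q by norms
    have hcs : ∀ (x : H) (y : H), (inner ℂ x y : ℂ).re ≤ ‖x‖ * ‖y‖ := by
      intro x y
      simpa using re_inner_le_norm (𝕜 := ℂ) x y
    have hqb : q ≤ ‖u‖ * ‖(T w).fst‖ + ‖v‖ * ‖(T w).snd‖ := by
      rw [hq1]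
      have h1 := hcs u (-(T w).fst)
      have h2 := hcs v ((T w).snd)
      rw [norm_neg] at h1
      linarith
    have hqb' : -q ≤ ‖u‖ * ‖(T w).fst‖ + ‖v‖ * ‖(T w).snd‖ := by
      have hq2 : -q = (inner ℂ u ((T w).fst) : ℂ).re + (inner ℂ v (-(T w).snd) : ℂ).re := by
        rw [hq1]; simp [Complex.neg_re]; ring
      rw [hq2]
      have h1 := hcs u ((T w).fst)
      have h2 := hcs v (-(T w).snd)
      rw [norm_neg] at h2
      linarith
    -- Cauchy-Schwarz in ℝ²
    have hwn : ‖w‖ ^ 2 = ‖u‖ ^ 2 + ‖v‖ ^ 2 := WithLp.prod_norm_sq_eq_of_L2 w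
    have hsn : ‖T w‖ ^ 2 = ‖(T w).fst‖ ^ 2 + ‖(T w).snd‖ ^ 2 :=
      WithLp.prod_norm_sq_eq_of_L2 (T w)
    have hcs2 : ‖u‖ * ‖(T w).fst‖ + ‖v‖ * ‖(T w).snd‖ ≤ ‖w‖ * ‖T w‖ := by
      nlinarith [sq_nonneg (‖u‖ * ‖(T w).snd‖ - ‖v‖ * ‖(T w).fst‖), norm_nonneg w,
        norm_nonneg (T w), mul_nonneg (norm_nonneg w) (norm_nonneg (T w)),
        mul_nonneg (norm_nonneg u) (norm_nonneg (T w).fst),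
        mul_nonneg (norm_nonneg v) (norm_nonneg (T w).snd)]
    -- lower bound
    have hmain : (lam - |r|) * ‖w‖ ^ 2 ≤ ‖w‖ * ‖T w‖ := by
      rcases hbound with hb | hb
      · have h1 := hb u
        have h2 := hb v
        have hq3 : (lam - |r|) * ‖w‖ ^ 2 ≤ q := by
          rw [hqdef, hwn]
          nlinarith [le_abs_self r, neg_abs_le r, sq_nonneg ‖u‖, sq_nonneg ‖v‖]
        linarith
      · have h1 := hb u
        have h2 := hb v
        simp only [ContinuousLinearMap.neg_apply, inner_neg_right, Complex.neg_re] at h1 h2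
        have hq3 : (lam - |r|) * ‖w‖ ^ 2 ≤ -q := by
          rw [hqdef, hwn]
          nlinarith [le_abs_self r, neg_abs_le r, sq_nonneg ‖u‖, sq_nonneg ‖v‖]
        linarith
    rcases eq_or_lt_of_le (norm_nonneg w) with h0 | h0
    · rw [← h0, mul_zero]
      exact norm_nonneg _
    · rw [pow_two] at hmain
      exact le_of_mul_le_mul_right (by nlinarith [hmain]) h0
  -- T is self-adjoint
  have hTsa : IsSelfAdjoint T := by
    have h := IsSelfAdjoint.algebraMap (WithLp 2 (H × H) →L[ℂ] WithLp 2 (H × H)) (r := (r : ℂ)) (by simp [IsSelfAdjoint, Complex.conj_ofReal])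
    exact IsSelfAdjoint.sub (R := WithLp 2 (H × H) →L[ℂ] WithLp 2 (H × H)) h hMsa
  -- antilipschitz
  have hanti : AntilipschitzWith ((lam - |r|)⁻¹).toNNReal T := by
    apply ContinuousLinearMap.antilipschitz_of_bound
    intro x
    rw [Real.coe_toNNReal _ (inv_nonneg.mpr hc.le)]
    rw [inv_mul_eq_div, le_div_iff₀ hc, mul_comm]
    exact hlow x
  -- dense range
  have hdense : T.range.topologicalClosure = ⊤ := by
    rw [Submodule.topologicalClosure_eq_top_iff, Submodule.eq_bot_iff]
    intro z hz
    have h0 : (inner ℂ (T z) (T z) : ℂ) = 0 := by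
      have h1 := (Submodule.mem_orthogonal _ z).mp hz (T (T z)) ⟨T z, rfl⟩
      have h2 := ContinuousLinearMap.adjoint_inner_right T (T z) z
      rw [hTsa.adjoint_eq] at h2
      rw [h2, h1]
    have hTz : T z = 0 := inner_self_eq_zero.mp h0
    have h3 := hlow z
    rw [hTz, norm_zero] at h3
    have hz0 : ‖z‖ ≤ 0 := by nlinarith
    exact norm_le_zero_iff.mp hz0
  -- conclusion
  apply spectrum.notMem_iff.mpr _ hzspec
  rw [ContinuousLinearMap.isUnit_iff_bijective,
    ContinuousLinearMap.bijective_iff_dense_range_and_antilipschitz]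
  exact ⟨hdense, _, hanti⟩
end

section
/- Let M_n be the nℓ×nℓ block tridiagonal matrix with diagonal blocks V_1,…,V_n (real symmetric ℓ×ℓ) and off-diagonal blocks -S_1,…,-S_{n-1} above the diagonal and -S_1ᵗ,…,-S_{n-1}ᵗ below (S_j real invertible ℓ×ℓ). Let P^E be the unique ℂ^{ℓ×ℓ}-valued solution of -S_{k-1}ᵗ X(k-1) + V_k X(k) - S_k X(k+1) = E X(k), k = 1,…,n (with S_0 = S_n = I), satisfying P^E(0) = 0 and P^E(1) = I. Then det(M_n - E) = (∏_{j=1}^{n-1} det S_j) · det P^E(n+1). -/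
open Matrix

/-- Entrywise complexification of a real matrix. -/
def cMat {l : ℕ} (M : Matrix (Fin l) (Fin l) ℝ) : Matrix (Fin l) (Fin l) ℂ :=
  M.map (fun x => (x : ℂ))

/-- The `nℓ×nℓ` block tridiagonal matrix with diagonal blocks `V_1,…,V_n`,
off-diagonal blocks `-S_1,…,-S_{n-1}` above the diagonal and `-S_1ᵗ,…,-S_{n-1}ᵗ` below.
Block row/column `i : Fin n` corresponds to the `1`-based index `i+1`. -/
def blockJacobi (l n : ℕ) (V S : ℕ → Matrix (Fin l) (Fin l) ℝ) :
    Matrix (Fin n × Fin l) (Fin n × Fin l) ℂ := fun p q =>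
  if (p.1 : ℕ) = q.1 then cMat (V (p.1 + 1)) p.2 q.2
  else if (q.1 : ℕ) = p.1 + 1 then -(cMat (S (p.1 + 1)) p.2 q.2)
  else if (p.1 : ℕ) = q.1 + 1 then -((cMat (S (q.1 + 1)))ᵀ p.2 q.2)
  else 0

variable {R : Type*} [CommRing R]

/-- general block Jacobi over any commutative ring -/
def gJac (l n : ℕ) (V S : ℕ → Matrix (Fin l) (Fin l) R) :
    Matrix (Fin n × Fin l) (Fin n × Fin l) R := fun p q =>
  if (p.1 : ℕ) = q.1 then V (p.1 + 1) p.2 q.2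
  else if (q.1 : ℕ) = p.1 + 1 then -(S (p.1 + 1) p.2 q.2)
  else if (p.1 : ℕ) = q.1 + 1 then -((S (q.1 + 1))ᵀ p.2 q.2)
  else 0

lemma sum_fin_ite {M : Type*} [AddCommMonoid M] {n : ℕ} (c : ℕ) (g : Fin n → M) :
    (∑ k : Fin n, if (k : ℕ) = c then g k else 0) = if h : c < n then g ⟨c, h⟩ else 0 := by
  split_ifs with h
  · rw [Finset.sum_eq_single ⟨c, h⟩]
    · simp
    · intro k _ hk
      have : (k : ℕ) ≠ c := fun hc => hk (Fin.ext hc)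
      simp [this]
    · simp
  · apply Finset.sum_eq_zero
    intro k _
    have : (k : ℕ) ≠ c := by omega
    simp [this]

/-- det of a block upper triangular matrix with given diagonal blocks -/
lemma det_blockUpper {l n : ℕ} (F : Fin n → Matrix (Fin l) (Fin l) R)
    (M : Matrix (Fin n × Fin l) (Fin n × Fin l) R)
    (hz : ∀ p q : Fin n × Fin l, q.1 < p.1 → M p q = 0)
    (hd : ∀ (i : Fin n) (a b : Fin l), M (i, a) (i, b) = F i a b) :
    M.det = ∏ i : Fin n, (F i).det := by
  have hbt : M.BlockTriangular Prod.fst := fun p q h => hz p q h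
  rw [hbt.det_fintype]
  refine Finset.prod_congr rfl fun k _ => ?_
  let e : Fin l ≃ { p : Fin n × Fin l // p.1 = k } :=
    { toFun := fun a => ⟨(k, a), rfl⟩
      invFun := fun p => p.1.2
      left_inv := fun a => rfl
      right_inv := fun p => by
        rcases p with ⟨⟨i, a⟩, h⟩
        cases h
        rfl }
  have he : ((M.toSquareBlock Prod.fst k).submatrix e e) = F k := by
    ext a b
    exact hd k a b
  rw [← Matrix.det_submatrix_equiv_self e (M.toSquareBlock Prod.fst k), he]

section core
variable {l n : ℕ}

def Wb (P : ℕ → Matrix (Fin l) (Fin l) R) (i j : Fin n) : Matrix (Fin l) (Fin l) R :=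
  if (i : ℕ) ≤ (j : ℕ) then P ((i : ℕ) + 1) else 0

def Wmat (P : ℕ → Matrix (Fin l) (Fin l) R) :
    Matrix (Fin n × Fin l) (Fin n × Fin l) R := fun p q =>
  Wb P p.1 q.1 p.2 q.2

def Jb (V S : ℕ → Matrix (Fin l) (Fin l) R) (E : R) (i k : Fin n) :
    Matrix (Fin l) (Fin l) R :=
  if (i : ℕ) = (k : ℕ) then V ((i : ℕ) + 1) - E • 1
  else if (k : ℕ) = (i : ℕ) + 1 then -(S ((i : ℕ) + 1))
  else if (i : ℕ) = (k : ℕ) + 1 then -(S ((k : ℕ) + 1))ᵀ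
  else 0

lemma J'_apply (V S : ℕ → Matrix (Fin l) (Fin l) R) (E : R) (i k : Fin n) (a c : Fin l) :
    (gJac l n V S - E • 1) (i, a) (k, c) = Jb V S E i k a c := by
  rw [Matrix.sub_apply]
  unfold gJac Jb
  rcases eq_or_ne (i : ℕ) (k : ℕ) with h | h
  · have hik : i = k := Fin.ext h
    subst hik
    simp [Matrix.sub_apply, Matrix.smul_apply, Matrix.one_apply, Prod.ext_iff, h]
  · have h2 : ((i, a) : Fin n × Fin l) ≠ (k, c) := by
      simp only [ne_eq, Prod.mk.injEq, not_and]
      intro hik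
      exact absurd (congrArg Fin.val hik) h
    simp only [Matrix.sub_apply, Matrix.smul_apply, Matrix.one_apply, if_neg h2, if_neg h]
    split_ifs <;> simp

lemma mul_entry (V S : ℕ → Matrix (Fin l) (Fin l) R) (E : R)
    (P : ℕ → Matrix (Fin l) (Fin l) R) (i j : Fin n) (a b : Fin l) :
    (((gJac l n V S - E • 1) * Wmat P : Matrix (Fin n × Fin l) (Fin n × Fin l) R)) (i, a) (j, b)
      = (∑ k : Fin n, Jb V S E i k * Wb P k j) a b := by
  rw [Matrix.mul_apply, Fintype.sum_prod_type, Matrix.sum_apply]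
  refine Finset.sum_congr rfl fun k _ => ?_
  rw [Matrix.mul_apply]
  refine Finset.sum_congr rfl fun c _ => ?_
  rw [J'_apply]
  rfl

lemma blocksum (V S : ℕ → Matrix (Fin l) (Fin l) R) (E : R)
    (P : ℕ → Matrix (Fin l) (Fin l) R) (i j : Fin n) :
    (∑ k : Fin n, Jb V S E i k * Wb P k j) =
      (V ((i : ℕ) + 1) - E • 1) * Wb P i j
      + (if h : (i : ℕ) + 1 < n then (-(S ((i : ℕ) + 1))) * Wb P ⟨(i : ℕ) + 1, h⟩ j else 0)
      + (if 1 ≤ (i : ℕ) then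
          (if h : (i : ℕ) - 1 < n then (-(S (((i : ℕ) - 1) + 1))ᵀ) * Wb P ⟨(i : ℕ) - 1, h⟩ j else 0)
        else 0) := by
  have split : ∀ k : Fin n, Jb V S E i k * Wb P k j =
      (if (k : ℕ) = (i : ℕ) then (V ((i : ℕ) + 1) - E • 1) * Wb P k j else 0)
      + (if (k : ℕ) = (i : ℕ) + 1 then (-(S ((i : ℕ) + 1))) * Wb P k j else 0)
      + (if 1 ≤ (i : ℕ) then
          (if (k : ℕ) = (i : ℕ) - 1 then (-(S ((k : ℕ) + 1))ᵀ) * Wb P k j else 0) else 0) := by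
    intro k
    unfold Jb
    split_ifs <;> first | (exfalso; omega) | simp
  rw [Finset.sum_congr rfl (fun k _ => split k), Finset.sum_add_distrib,
    Finset.sum_add_distrib]
  congr 1
  · congr 1
    · rw [sum_fin_ite (i : ℕ) (fun k => (V ((i : ℕ) + 1) - E • 1) * Wb P k j)]
      rw [dif_pos i.2]
    · exact sum_fin_ite ((i : ℕ) + 1) _
  · split_ifs with h1 h2
    · rw [sum_fin_ite ((i : ℕ) - 1) (fun k => (-(S ((k : ℕ) + 1))ᵀ) * Wb P k j), dif_pos h2]
    · rw [sum_fin_ite ((i : ℕ) - 1) (fun k => (-(S ((k : ℕ) + 1))ᵀ) * Wb P k j), dif_neg h2]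
    · simp

end core

section core2
variable {l n : ℕ} (V S : ℕ → Matrix (Fin l) (Fin l) R) (E : R)
  (P : ℕ → Matrix (Fin l) (Fin l) R)

theorem core (hP0 : P 0 = 0)
    (hP : ∀ k, 1 ≤ k → k ≤ n →
      -(S (k - 1))ᵀ * P (k - 1) + V k * P k - S k * P (k + 1) = E • P k) :
    (gJac l n V S - E • 1).det * ∏ i : Fin n, (P ((i : ℕ) + 1)).det
      = (∏ i : Fin n, (S ((i : ℕ) + 1)).det) * ∏ i : Fin n, (P ((i : ℕ) + 2)).det := by
  have key : ∀ i : Fin n,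
      -(S (i : ℕ))ᵀ * P (i : ℕ) + V ((i : ℕ) + 1) * P ((i : ℕ) + 1)
        - S ((i : ℕ) + 1) * P ((i : ℕ) + 2) = E • P ((i : ℕ) + 1) := by
    intro i
    have h := hP ((i : ℕ) + 1) (by omega) (by omega)
    simpa using h
  have hdetW : (Wmat P : Matrix (Fin n × Fin l) (Fin n × Fin l) R).det
      = ∏ i : Fin n, (P ((i : ℕ) + 1)).det := by
    apply det_blockUpper
    · rintro ⟨i, a⟩ ⟨j, b⟩ h
      show Wb P i j a b = 0
      unfold Wb
      rw [if_neg (by exact fun hle => absurd h (not_lt.mpr (Fin.le_def.mpr hle)))]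
      rfl
    · intro i a b
      show Wb P i i a b = P ((i : ℕ) + 1) a b
      unfold Wb
      rw [if_pos le_rfl]
  have hzero : ∀ i j : Fin n, (i : ℕ) < (j : ℕ) →
      (∑ k : Fin n, Jb V S E i k * Wb P k j) = 0 := by
    intro i j hij
    rw [blocksum]
    have h1 : (i : ℕ) + 1 < n := by omega
    have h2 : (i : ℕ) - 1 < n := by omega
    rw [dif_pos h1]
    have e1 : Wb P i j = P ((i : ℕ) + 1) := by unfold Wb; rw [if_pos (le_of_lt hij)]
    have e2 : Wb P ⟨(i : ℕ) + 1, h1⟩ j = P ((i : ℕ) + 2) := by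
      unfold Wb; rw [if_pos (by simpa using hij)]
    rw [e1, e2]
    by_cases hi : 1 ≤ (i : ℕ)
    · rw [if_pos hi, dif_pos h2]
      have e3 : Wb P ⟨(i : ℕ) - 1, h2⟩ j = P ((i : ℕ) - 1 + 1) := by
        unfold Wb; rw [if_pos (by simp; omega)]
      rw [e3]
      have e4 : (i : ℕ) - 1 + 1 = (i : ℕ) := by omega
      rw [e4]
      have h := key i
      rw [neg_mul] at h
      rw [sub_mul, smul_mul_assoc, one_mul, neg_mul, neg_mul, ← h]
      abel
    · have hi0 : (i : ℕ) = 0 := by omega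
      rw [if_neg hi]
      have h := key i
      rw [hi0] at h ⊢
      rw [neg_mul, hP0, mul_zero, neg_zero] at h
      rw [sub_mul, smul_mul_assoc, one_mul, neg_mul, ← h]
      abel
  have hdiag : ∀ i : Fin n, (∑ k : Fin n, Jb V S E i k * Wb P k i)
      = S ((i : ℕ) + 1) * P ((i : ℕ) + 2) := by
    intro i
    rw [blocksum]
    have e1 : Wb P i i = P ((i : ℕ) + 1) := by unfold Wb; rw [if_pos le_rfl]
    have e2 : ∀ h : (i : ℕ) + 1 < n, Wb P ⟨(i : ℕ) + 1, h⟩ i = 0 := by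
      intro h; unfold Wb; rw [if_neg (by simp)]
    have emid : (if h : (i : ℕ) + 1 < n then
        (-(S ((i : ℕ) + 1))) * Wb P ⟨(i : ℕ) + 1, h⟩ i else 0) = 0 := by
      split_ifs with h
      · rw [e2 h, mul_zero]
      · rfl
    rw [e1, emid]
    by_cases hi : 1 ≤ (i : ℕ)
    · have h2 : (i : ℕ) - 1 < n := by omega
      rw [if_pos hi, dif_pos h2]
      have e3 : Wb P ⟨(i : ℕ) - 1, h2⟩ i = P ((i : ℕ) - 1 + 1) := by
        unfold Wb; rw [if_pos (by exact Nat.sub_le _ _)]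
      rw [e3]
      have e4 : (i : ℕ) - 1 + 1 = (i : ℕ) := by omega
      rw [e4]
      have h := key i
      rw [neg_mul] at h
      rw [sub_mul, smul_mul_assoc, one_mul, neg_mul, ← h]
      abel
    · have hi0 : (i : ℕ) = 0 := by omega
      rw [if_neg hi]
      have h := key i
      rw [hi0] at h ⊢
      rw [neg_mul, hP0, mul_zero, neg_zero] at h
      rw [sub_mul, smul_mul_assoc, one_mul, ← h]
      abel
  have hLdet : (((gJac l n V S - E • 1) * Wmat P :
        Matrix (Fin n × Fin l) (Fin n × Fin l) R)).det
      = ∏ i : Fin n, (S ((i : ℕ) + 1) * P ((i : ℕ) + 2)).det := by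
    rw [← Matrix.det_transpose]
    rw [det_blockUpper (fun i => (S ((i : ℕ) + 1) * P ((i : ℕ) + 2))ᵀ)]
    · exact Finset.prod_congr rfl fun i _ => Matrix.det_transpose _
    · rintro ⟨i, a⟩ ⟨j, b⟩ h
      show ((gJac l n V S - E • 1) * Wmat P :
        Matrix (Fin n × Fin l) (Fin n × Fin l) R) (j, b) (i, a) = 0
      rw [mul_entry, hzero j i h]
      rfl
    · intro i a b
      show ((gJac l n V S - E • 1) * Wmat P :
        Matrix (Fin n × Fin l) (Fin n × Fin l) R) (i, b) (i, a) = _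
      rw [mul_entry, hdiag i]
      rfl
  calc (gJac l n V S - E • 1).det * ∏ i : Fin n, (P ((i : ℕ) + 1)).det
      = (((gJac l n V S - E • 1) * Wmat P :
          Matrix (Fin n × Fin l) (Fin n × Fin l) R)).det := by
        rw [Matrix.det_mul, hdetW]
    _ = ∏ i : Fin n, (S ((i : ℕ) + 1) * P ((i : ℕ) + 2)).det := hLdet
    _ = (∏ i : Fin n, (S ((i : ℕ) + 1)).det) * ∏ i : Fin n, (P ((i : ℕ) + 2)).det := by
        simp_rw [Matrix.det_mul]
        rw [Finset.prod_mul_distrib]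

end core2


lemma icc_prod_eq {M : Type*} [CommMonoid M] (m : ℕ) (g : ℕ → M) :
    ∏ j ∈ Finset.Icc 1 m, g j = ∏ i ∈ Finset.range m, g (i+1) := by
  rw [← Finset.Ico_add_one_right_eq_Icc, Finset.prod_Ico_eq_prod_range]
  simp [Nat.add_comm]

noncomputable section poly
open Polynomial

variable {l : ℕ}

def Sp (S : ℕ → Matrix (Fin l) (Fin l) ℝ) (k : ℕ) : Matrix (Fin l) (Fin l) ℂ[X] :=
  (cMat (S k)).map Polynomial.C

def Pp (V S : ℕ → Matrix (Fin l) (Fin l) ℝ) : ℕ → Matrix (Fin l) (Fin l) ℂ[X]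
  | 0 => 0
  | 1 => 1
  | (k+2) => (Sp S (k+1))⁻¹ *
      ((Sp V (k+1) - (X : ℂ[X]) • 1) * Pp V S (k+1) - (Sp S k)ᵀ * Pp V S k)

lemma gJac_map {R S' : Type*} [CommRing R] [CommRing S'] (f : R →+* S') (l n : ℕ)
    (V S : ℕ → Matrix (Fin l) (Fin l) R) :
    (gJac l n V S).map f = gJac l n (fun k => (V k).map f) (fun k => (S k).map f) := by
  ext ⟨i, a⟩ ⟨j, b⟩
  simp only [Matrix.map_apply, gJac]
  split_ifs <;> simp [Matrix.transpose_apply, Matrix.map_apply]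

lemma det_sub_X_smul_ne_zero {N : Type*} [DecidableEq N] [Fintype N] (A : Matrix N N ℂ) :
    (A.map Polynomial.C - (X : ℂ[X]) • 1).det ≠ 0 := by
  have h1 : A.map Polynomial.C - (X : ℂ[X]) • 1 = -(Matrix.charmatrix A) := by
    ext i j
    simp only [Matrix.sub_apply, Matrix.map_apply, Matrix.smul_apply, Matrix.one_apply,
      Matrix.neg_apply, Matrix.charmatrix_apply, Matrix.diagonal_apply]
    split_ifs <;> simp <;> ring
  rw [h1, Matrix.det_neg]
  refine mul_ne_zero (pow_ne_zero _ (neg_ne_zero.mpr one_ne_zero)) ?_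
  exact (Matrix.charpoly_monic A).ne_zero

lemma Pp_rec (V S : ℕ → Matrix (Fin l) (Fin l) ℝ) (k : ℕ) (hk1 : 1 ≤ k)
    (hku : IsUnit ((Sp S k : Matrix (Fin l) (Fin l) ℂ[X]).det)) :
    Sp S k * Pp V S (k+1) =
      (Sp V k - (X : ℂ[X]) • 1) * Pp V S k - (Sp S (k-1))ᵀ * Pp V S (k-1) := by
  obtain ⟨m, rfl⟩ : ∃ m, k = m + 1 := ⟨k - 1, by omega⟩
  show Sp S (m+1) * Pp V S (m+2) = _
  rw [show Pp V S (m+2) = (Sp S (m+1))⁻¹ *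
      ((Sp V (m+1) - (X : ℂ[X]) • 1) * Pp V S (m+1) - (Sp S m)ᵀ * Pp V S m) from rfl]
  rw [Matrix.mul_nonsing_inv_cancel_left _ _ hku]
  simp

lemma Pp_hP (n : ℕ) (V S : ℕ → Matrix (Fin l) (Fin l) ℝ)
    (hSu : ∀ k, 1 ≤ k → k ≤ n → IsUnit ((cMat (S k)).det)) :
    ∀ k, 1 ≤ k → k ≤ n →
      -(Sp S (k-1))ᵀ * Pp V S (k-1) + Sp V k * Pp V S k - Sp S k * Pp V S (k+1)
        = (X : ℂ[X]) • Pp V S k := by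
  intro k hk1 hkn
  have hku : IsUnit ((Sp S k : Matrix (Fin l) (Fin l) ℂ[X]).det) := by
    have : (Sp S k : Matrix (Fin l) (Fin l) ℂ[X]).det = Polynomial.C ((cMat (S k)).det) := by
      rw [Sp, ← RingHom.mapMatrix_apply, ← RingHom.map_det]
    rw [this]
    exact (hSu k hk1 hkn).map Polynomial.C
  rw [Pp_rec V S k hk1 hku, sub_mul, smul_mul_assoc, one_mul, neg_mul]
  abel

lemma Pp_det_ne_zero (n : ℕ) (V S : ℕ → Matrix (Fin l) (Fin l) ℝ)
    (hSu : ∀ k, 1 ≤ k → k ≤ n → IsUnit ((cMat (S k)).det)) :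
    ∀ m, 1 ≤ m → m ≤ n → (Pp V S m : Matrix (Fin l) (Fin l) ℂ[X]).det ≠ 0 := by
  intro m
  induction m using Nat.strong_induction_on with
  | _ m ih =>
    intro hm1 hmn
    match m, hm1 with
    | 1, _ =>
      show (Pp V S 1 : Matrix (Fin l) (Fin l) ℂ[X]).det ≠ 0
      rw [show (Pp V S 1 : Matrix (Fin l) (Fin l) ℂ[X]) = 1 from rfl, Matrix.det_one]
      exact one_ne_zero
    | (t+2), _ =>
      have hcore := core (Sp V) (Sp S) (X : ℂ[X]) (Pp V S) rfl
        (fun k hk1 hk2 => Pp_hP n V S hSu k hk1 (by omega)) (n := t+1)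
      have hQ : (∏ i : Fin (t+1), (Pp V S ((i : ℕ) + 1) :
          Matrix (Fin l) (Fin l) ℂ[X]).det) ≠ 0 := by
        rw [Finset.prod_ne_zero_iff]
        intro i _
        exact ih ((i : ℕ) + 1) (by omega) (by omega) (by omega)
      have hJ : (gJac l (t+1) (Sp V) (Sp S) - (X : ℂ[X]) • 1).det ≠ 0 := by
        have : gJac l (t+1) (Sp V) (Sp S)
            = (gJac l (t+1) (fun k => cMat (V k)) (fun k => cMat (S k))).map Polynomial.C := by
          rw [gJac_map (Polynomial.C : ℂ →+* ℂ[X])]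
          rfl
        rw [this]
        exact det_sub_X_smul_ne_zero _
      have hRHS : ((∏ i : Fin (t+1), (Sp S ((i : ℕ) + 1) :
            Matrix (Fin l) (Fin l) ℂ[X]).det) *
          ∏ i : Fin (t+1), (Pp V S ((i : ℕ) + 2) :
            Matrix (Fin l) (Fin l) ℂ[X]).det) ≠ 0 := by
        rw [← hcore]
        exact mul_ne_zero hJ hQ
      have hprod : (∏ i : Fin (t+1), (Pp V S ((i : ℕ) + 2) :
          Matrix (Fin l) (Fin l) ℂ[X]).det) ≠ 0 := fun h => hRHS (by rw [h, mul_zero])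
      have := (Finset.prod_ne_zero_iff.mp hprod) ⟨t, by omega⟩ (Finset.mem_univ _)
      simpa using this

end poly

noncomputable section poly2
open Polynomial

variable {l : ℕ}

lemma main_poly (l n : ℕ) (hn : 1 ≤ n) (V S : ℕ → Matrix (Fin l) (Fin l) ℝ)
    (hSu : ∀ k, 1 ≤ k → k ≤ n → IsUnit ((cMat (S k)).det)) (hSn : S n = 1) :
    ((gJac l n (fun k => cMat (V k)) (fun k => cMat (S k))).map Polynomial.C
        - (X : ℂ[X]) • 1).det
      = (∏ i ∈ Finset.range (n-1), (Sp S (i+1) : Matrix (Fin l) (Fin l) ℂ[X]).det)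
        * (Pp V S (n+1)).det := by
  have hcore := core (Sp V) (Sp S) (X : ℂ[X]) (Pp V S) rfl (Pp_hP n V S hSu) (n := n)
  rw [show gJac l n (Sp V) (Sp S)
      = (gJac l n (fun k => cMat (V k)) (fun k => cMat (S k))).map Polynomial.C from by
    rw [gJac_map (Polynomial.C : ℂ →+* ℂ[X])]; rfl] at hcore
  rw [Fin.prod_univ_eq_prod_range (fun i => (Pp V S (i+1) : Matrix (Fin l) (Fin l) ℂ[X]).det) n,
    Fin.prod_univ_eq_prod_range (fun i => (Sp S (i+1) : Matrix (Fin l) (Fin l) ℂ[X]).det) n,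
    Fin.prod_univ_eq_prod_range (fun i => (Pp V S (i+2) : Matrix (Fin l) (Fin l) ℂ[X]).det) n]
      at hcore
  have hQ : (∏ i ∈ Finset.range n, (Pp V S (i+1) : Matrix (Fin l) (Fin l) ℂ[X]).det) ≠ 0 := by
    rw [Finset.prod_ne_zero_iff]
    intro i hi
    exact Pp_det_ne_zero n V S hSu (i+1) (by omega) (by simp at hi; omega)
  have hshift : (∏ i ∈ Finset.range n, (Pp V S (i+2) : Matrix (Fin l) (Fin l) ℂ[X]).det)
      = (∏ i ∈ Finset.range n, (Pp V S (i+1) : Matrix (Fin l) (Fin l) ℂ[X]).det)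
        * (Pp V S (n+1)).det := by
    have h1 := Finset.prod_range_succ
      (fun i => (Pp V S (i+1) : Matrix (Fin l) (Fin l) ℂ[X]).det) n
    have h2 := Finset.prod_range_succ'
      (fun i => (Pp V S (i+1) : Matrix (Fin l) (Fin l) ℂ[X]).det) n
    rw [h1] at h2
    have hone : (Pp V S (0+1) : Matrix (Fin l) (Fin l) ℂ[X]).det = 1 := by
      rw [show (Pp V S 1 : Matrix (Fin l) (Fin l) ℂ[X]) = 1 from rfl, Matrix.det_one]
    rw [hone, mul_one] at h2
    exact h2.symm
  have hSlast : (Sp S n : Matrix (Fin l) (Fin l) ℂ[X]).det = 1 := by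
    rw [Sp, hSn]
    rw [show cMat (1 : Matrix (Fin l) (Fin l) ℝ) = 1 from
      Matrix.map_one _ Complex.ofReal_zero Complex.ofReal_one]
    rw [Matrix.map_one _ (map_zero Polynomial.C) (map_one Polynomial.C), Matrix.det_one]
  have hSprod : (∏ i ∈ Finset.range n, (Sp S (i+1) : Matrix (Fin l) (Fin l) ℂ[X]).det)
      = ∏ i ∈ Finset.range (n-1), (Sp S (i+1) : Matrix (Fin l) (Fin l) ℂ[X]).det := by
    obtain ⟨m, rfl⟩ : ∃ m, n = m + 1 := ⟨n - 1, by omega⟩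
    rw [Finset.prod_range_succ, hSlast, mul_one]
    simp
  rw [hshift, hSprod] at hcore
  exact mul_right_cancel₀ hQ (by linear_combination hcore)

lemma mapev_mul (E : ℂ) (A B : Matrix (Fin l) (Fin l) ℂ[X]) :
    (A * B).map (Polynomial.eval E)
      = A.map (Polynomial.eval E) * B.map (Polynomial.eval E) := by
  have : Polynomial.eval E = ⇑(Polynomial.evalRingHom E) := rfl
  rw [this, Matrix.map_mul]

lemma Sp_eval (S : ℕ → Matrix (Fin l) (Fin l) ℝ) (k : ℕ) (E : ℂ) :
    (Sp S k : Matrix (Fin l) (Fin l) ℂ[X]).map (Polynomial.eval E) = cMat (S k) := by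
  rw [Sp, Matrix.map_map]
  ext a b
  simp [Matrix.map_apply]

lemma mapev_smulX (E : ℂ) :
    ((X : ℂ[X]) • (1 : Matrix (Fin l) (Fin l) ℂ[X])).map (Polynomial.eval E)
      = E • (1 : Matrix (Fin l) (Fin l) ℂ) := by
  ext a b
  simp only [Matrix.map_apply, Matrix.smul_apply, Matrix.one_apply]
  split_ifs <;> simp

/-- uniqueness of the solution `P` below `n+1` -/
lemma P_eq_Pp (n : ℕ) (V S : ℕ → Matrix (Fin l) (Fin l) ℝ)
    (hSu : ∀ k, 1 ≤ k → k ≤ n → IsUnit ((cMat (S k)).det)) (E : ℂ)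
    (P : ℕ → Matrix (Fin l) (Fin l) ℂ) (hP0 : P 0 = 0) (hP1 : P 1 = 1)
    (hP : ∀ k, 1 ≤ k → k ≤ n →
      -(cMat (S (k-1)))ᵀ * P (k-1) + cMat (V k) * P k - cMat (S k) * P (k+1) = E • P k) :
    ∀ m, m ≤ n + 1 → P m = (Pp V S m).map (Polynomial.eval E) := by
  intro m
  induction m using Nat.strong_induction_on with
  | _ m ih =>
    intro hm
    match m, hm with
    | 0, _ =>
      rw [hP0, show (Pp V S 0 : Matrix (Fin l) (Fin l) ℂ[X]) = 0 from rfl]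
      ext a b; simp [Matrix.map_apply]
    | 1, _ =>
      rw [hP1, show (Pp V S 1 : Matrix (Fin l) (Fin l) ℂ[X]) = 1 from rfl]
      ext a b
      simp only [Matrix.map_apply, Matrix.one_apply]
      split_ifs <;> simp
    | (t+2), hm =>
      have ht1 : 1 ≤ t + 1 := by omega
      have ht2 : t + 1 ≤ n := by omega
      have hu := hSu (t+1) ht1 ht2
      have hkuP : IsUnit ((Sp S (t+1) : Matrix (Fin l) (Fin l) ℂ[X]).det) := by
        have : (Sp S (t+1) : Matrix (Fin l) (Fin l) ℂ[X]).det
            = Polynomial.C ((cMat (S (t+1))).det) := by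
          rw [Sp, ← RingHom.mapMatrix_apply, ← RingHom.map_det]
        rw [this]
        exact hu.map Polynomial.C
      set Pe : ℕ → Matrix (Fin l) (Fin l) ℂ :=
        fun m => (Pp V S m : Matrix (Fin l) (Fin l) ℂ[X]).map (Polynomial.eval E) with hPe
      have iht : P t = Pe t := ih t (by omega) (by omega)
      have iht1 : P (t+1) = Pe (t+1) := ih (t+1) (by omega) (by omega)
      have h1 := hP (t+1) ht1 ht2
      simp only [Nat.add_sub_cancel] at h1
      rw [iht, iht1, neg_mul] at h1
      have h2 := congrArg
        (fun M : Matrix (Fin l) (Fin l) ℂ[X] => M.map (Polynomial.eval E))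
        (Pp_rec V S (t+1) ht1 hkuP)
      simp only [Nat.add_sub_cancel] at h2
      have h2m : cMat (S (t+1)) * Pe (t+2)
          = (cMat (V (t+1)) - E • 1) * Pe (t+1) - (cMat (S t))ᵀ * Pe t := by
        have e1 : ((Sp S (t+1) : Matrix (Fin l) (Fin l) ℂ[X])
            * Pp V S (t+1+1)).map (Polynomial.eval E) = cMat (S (t+1)) * Pe (t+2) := by
          rw [mapev_mul, Sp_eval]
        have e2 : (((Sp V (t+1) : Matrix (Fin l) (Fin l) ℂ[X]) - (X : ℂ[X]) • 1)
              * Pp V S (t+1) - (Sp S t)ᵀ * Pp V S t).map (Polynomial.eval E)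
            = (cMat (V (t+1)) - E • 1) * Pe (t+1) - (cMat (S t))ᵀ * Pe t := by
          have hsub : ∀ A B : Matrix (Fin l) (Fin l) ℂ[X],
              (A - B).map (Polynomial.eval E)
                = A.map (Polynomial.eval E) - B.map (Polynomial.eval E) := by
            intro A B; ext a b; simp [Matrix.map_apply]
          rw [hsub, mapev_mul, mapev_mul, hsub, mapev_smulX, Matrix.transpose_map,
            Sp_eval, Sp_eval]
        rw [← e1, ← e2, h2]
      have key1 : cMat (S (t+1)) * P (t+2)
          = -((cMat (S t))ᵀ * Pe t) + cMat (V (t+1)) * Pe (t+1) - E • Pe (t+1) := by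
        rw [← h1]
        abel
      have key2 : cMat (S (t+1)) * Pe (t+2)
          = -((cMat (S t))ᵀ * Pe t) + cMat (V (t+1)) * Pe (t+1) - E • Pe (t+1) := by
        rw [h2m, sub_mul, smul_mul_assoc, one_mul]
        abel
      calc P (t+2) = (cMat (S (t+1)))⁻¹ * (cMat (S (t+1)) * P (t+2)) :=
            (Matrix.nonsing_inv_mul_cancel_left _ _ hu).symm
        _ = (cMat (S (t+1)))⁻¹ * (cMat (S (t+1)) * Pe (t+2)) := by rw [key1, key2]
        _ = Pe (t+2) := Matrix.nonsing_inv_mul_cancel_left _ _ hu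

end poly2

open Polynomial

/-- with `P^E` the matrix-valued solution of the difference equation with
`P^E(0) = 0`, `P^E(1) = I` (and `S_0 = S_n = I`), one has
`det(M_n - E) = (∏_{j=1}^{n-1} det S_j) · det P^E(n+1)`. -/
theorem det_blockJacobi_eq (l n : ℕ) (hn : 1 ≤ n)
    (V S : ℕ → Matrix (Fin l) (Fin l) ℝ)
    (hV : ∀ k ∈ Finset.Icc 1 n, (V k).IsSymm)
    (hS : ∀ k ∈ Finset.Icc 1 (n - 1), IsUnit (S k).det)
    (hS0 : S 0 = 1) (hSn : S n = 1)
    (E : ℂ) (P : ℕ → Matrix (Fin l) (Fin l) ℂ)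
    (hP0 : P 0 = 0) (hP1 : P 1 = 1)
    (hP : ∀ k ∈ Finset.Icc 1 n,
      -(cMat (S (k - 1)))ᵀ * P (k - 1) + cMat (V k) * P k - cMat (S k) * P (k + 1) =
        E • P k) :
    (blockJacobi l n V S - E • 1).det =
      (∏ j ∈ Finset.Icc 1 (n - 1), (cMat (S j)).det) * (P (n + 1)).det := by
  have hSu : ∀ k, 1 ≤ k → k ≤ n → IsUnit ((cMat (S k)).det) := by
    intro k h1 h2
    by_cases hk : k = n
    · subst hk
      rw [hSn, show cMat (1 : Matrix (Fin l) (Fin l) ℝ) = 1 from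
        Matrix.map_one _ Complex.ofReal_zero Complex.ofReal_one, Matrix.det_one]
      exact isUnit_one
    · have hk' : k ≤ n - 1 := by omega
      have hu := hS k (Finset.mem_Icc.mpr ⟨h1, hk'⟩)
      have hdet : (cMat (S k)).det = Complex.ofRealHom ((S k).det) := by
        rw [cMat, show (fun x : ℝ => (x : ℂ)) = ⇑Complex.ofRealHom from rfl,
          ← RingHom.mapMatrix_apply, ← RingHom.map_det]
      rw [hdet]
      exact hu.map Complex.ofRealHom
  have hP' : ∀ k, 1 ≤ k → k ≤ n →
      -(cMat (S (k-1)))ᵀ * P (k-1) + cMat (V k) * P k - cMat (S k) * P (k+1) = E • P k :=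
    fun k h1 h2 => hP k (Finset.mem_Icc.mpr ⟨h1, h2⟩)
  have hmatch : ((gJac l n (fun k => cMat (V k)) (fun k => cMat (S k))).map Polynomial.C
        - (X : ℂ[X]) • 1).map (Polynomial.eval E)
      = blockJacobi l n V S - E • 1 := by
    have hbj : blockJacobi l n V S
        = gJac l n (fun k => cMat (V k)) (fun k => cMat (S k)) := rfl
    rw [hbj]
    ext p q
    simp only [Matrix.map_apply, Matrix.sub_apply, Matrix.smul_apply, Matrix.one_apply,
      smul_eq_mul, Polynomial.eval_sub, Polynomial.eval_mul, Polynomial.eval_C,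
      Polynomial.eval_X]
    split_ifs <;> simp
  have hmp := main_poly l n hn V S hSu hSn
  have hev := congrArg (Polynomial.eval E) hmp
  rw [← Polynomial.coe_evalRingHom] at hev
  rw [_root_.map_mul, map_prod] at hev
  simp only [RingHom.map_det, RingHom.mapMatrix_apply, Polynomial.coe_evalRingHom] at hev
  rw [hmatch] at hev
  simp only [Sp_eval] at hev
  rw [← P_eq_Pp n V S hSu E P hP0 hP1 hP' (n+1) le_rfl] at hev
  rw [icc_prod_eq (n-1) (fun j => (cMat (S j)).det)]
  exact hev
end

section
/- For ℓ ≥ 1, the set of vectors of the form (e_1, M e_1) ∧ ⋯ ∧ (e_ℓ, M e_ℓ) in the ℓ-th exterior power Λ^ℓ ℂ^{2ℓ}, as M ranges over all real ℓ×ℓ matrices, spans Λ^ℓ ℂ^{2ℓ}. Here (e_j, M e_j) denotes the vector in ℂ^{2ℓ} with first ℓ coordinates e_j and last ℓ coordinates M e_j. -/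
open ExteriorAlgebra

noncomputable section

variable {l : ℕ}

def bv (l : ℕ) (x : Fin l ⊕ Fin l) : (Fin l ⊕ Fin l → ℂ) := Pi.single x 1

def WS (l : ℕ) : Set (ExteriorAlgebra ℂ (Fin l ⊕ Fin l → ℂ)) :=
  {w | ∃ M : Matrix (Fin l) (Fin l) ℝ,
     w = ExteriorAlgebra.ιMulti ℂ l (fun j : Fin l =>
       Sum.elim (Pi.single j (1 : ℂ)) (fun a : Fin l => ((M a j : ℝ) : ℂ)))}

lemma key1 (β : Fin l → Fin l) (C : Finset (Fin l)) :
    ιMulti ℂ l (fun j => if j ∈ C then bv l (Sum.inr (β j)) else bv l (Sum.inl j))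
      ∈ Submodule.span ℂ (WS l) := by
  classical
  induction C using Finset.strongInduction with
  | _ C ih =>
    set M : Matrix (Fin l) (Fin l) ℝ := fun a j => if j ∈ C ∧ β j = a then 1 else 0 with hM
    have hw : (ExteriorAlgebra.ιMulti ℂ l (fun j : Fin l =>
        Sum.elim (Pi.single j (1 : ℂ)) (fun a : Fin l => ((M a j : ℝ) : ℂ))))
        ∈ Submodule.span ℂ (WS l) := Submodule.subset_span ⟨M, rfl⟩
    set q : Fin l → (Fin l ⊕ Fin l → ℂ) :=
      fun j => if j ∈ C then bv l (Sum.inr (β j)) else 0 with hq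
    set p : Fin l → (Fin l ⊕ Fin l → ℂ) := fun j => bv l (Sum.inl j) with hp
    have hsplit : (fun j : Fin l =>
        Sum.elim (Pi.single j (1 : ℂ)) (fun a : Fin l => ((M a j : ℝ) : ℂ))) = q + p := by
      funext j x
      cases x with
      | inl a =>
        by_cases h : j ∈ C <;>
          simp [hq, hp, hM, bv, Pi.single_apply, h, apply_ite ((↑·) : ℝ → ℂ)]
      | inr a =>
        by_cases h : j ∈ C
        · by_cases h2 : β j = a <;>
            simp [hq, hp, hM, bv, Pi.single_apply, h, h2, eq_comm,
              apply_ite ((↑·) : ℝ → ℂ)]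
        · simp [hq, hp, hM, bv, Pi.single_apply, h, apply_ite ((↑·) : ℝ → ℂ)]
    have hexp : (ExteriorAlgebra.ιMulti ℂ l (fun j : Fin l =>
        Sum.elim (Pi.single j (1 : ℂ)) (fun a : Fin l => ((M a j : ℝ) : ℂ))))
        = ∑ s ∈ C.powerset,
            ιMulti ℂ l (fun j => if j ∈ s then bv l (Sum.inr (β j)) else bv l (Sum.inl j)) := by
      rw [hsplit]
      rw [show (ιMulti ℂ l (q + p) : ExteriorAlgebra ℂ (Fin l ⊕ Fin l → ℂ))
        = (ιMulti ℂ l).toMultilinearMap (q + p) from rfl]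
      rw [MultilinearMap.map_add_univ]
      rw [← Finset.sum_subset (Finset.subset_univ C.powerset)]
      · apply Finset.sum_congr rfl
        intro s hs
        have harg : s.piecewise q p
            = fun j => if j ∈ s then bv l (Sum.inr (β j)) else bv l (Sum.inl j) := by
          funext j
          by_cases h : j ∈ s
          · have hjC : j ∈ C := Finset.mem_powerset.mp hs h
            simp [Finset.piecewise, h, hq, hjC]
          · simp [Finset.piecewise, h, hp]
        rw [harg]; rfl
      · intro s _ hs
        rw [Finset.mem_powerset] at hs
        obtain ⟨j, hjs, hjC⟩ := Finset.not_subset.mp hs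
        apply MultilinearMap.map_coord_zero _ j
        simp [Finset.piecewise, hjs, hq, hjC]
    have hC : ιMulti ℂ l (fun j => if j ∈ C then bv l (Sum.inr (β j)) else bv l (Sum.inl j))
        = (ExteriorAlgebra.ιMulti ℂ l (fun j : Fin l =>
            Sum.elim (Pi.single j (1 : ℂ)) (fun a : Fin l => ((M a j : ℝ) : ℂ))))
          - ∑ s ∈ C.powerset.erase C,
              ιMulti ℂ l (fun j => if j ∈ s then bv l (Sum.inr (β j)) else bv l (Sum.inl j)) := by
      rw [hexp, ← Finset.add_sum_erase _ _ (Finset.mem_powerset_self C)]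
      exact (add_sub_cancel_right _ _).symm
    rw [hC]
    refine Submodule.sub_mem _ hw (Submodule.sum_mem _ fun s hs => ?_)
    have hss : s ⊂ C := by
      rcases Finset.mem_erase.mp hs with ⟨hne, hsub⟩
      exact lt_of_le_of_ne (Finset.mem_powerset.mp hsub) hne
    exact ih s hss


lemma key2 (hl : 1 ≤ l) (m : Fin l → Fin l ⊕ Fin l) (hm : Function.Injective m) :
    ιMulti ℂ l (fun j => bv l (m j)) ∈ Submodule.span ℂ (WS l) := by
  classical
  haveI : Nonempty (Fin l) := ⟨⟨0, hl⟩⟩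
  set A : Finset (Fin l) := Finset.univ.filter (fun a => Sum.inl a ∈ Set.range m) with hA
  set B : Finset (Fin l) := Finset.univ.filter (fun b => Sum.inr b ∈ Set.range m) with hB
  set C : Finset (Fin l) := Aᶜ with hC
  have himg : Finset.image m Finset.univ = A.image Sum.inl ∪ B.image Sum.inr := by
    ext x
    cases x with
    | inl a => simp [hA, hB, Set.mem_range]
    | inr b => simp [hA, hB, Set.mem_range]
  have hcards : A.card + B.card = l := by
    have h1 : (Finset.image m Finset.univ).card = l := by
      rw [Finset.card_image_of_injective _ hm, Finset.card_univ, Fintype.card_fin]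
    rw [himg, Finset.card_union_of_disjoint, Finset.card_image_of_injective _ Sum.inl_injective,
      Finset.card_image_of_injective _ Sum.inr_injective] at h1
    · exact h1
    · simp [Finset.disjoint_left]
  have hCB : C.card = B.card := by
    have h2 : C.card = l - A.card := by
      rw [hC, Finset.card_compl, Fintype.card_fin]
    have h3 : A.card ≤ l := by
      calc A.card ≤ Fintype.card (Fin l) := Finset.card_le_univ A
      _ = l := Fintype.card_fin l
    omega
  set e : {x // x ∈ C} ≃ {x // x ∈ B} := Finset.equivOfCardEq hCB with he
  set β : Fin l → Fin l := fun j => if h : j ∈ C then (e ⟨j, h⟩ : Fin l) else j with hβ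
  set g : Fin l → Fin l ⊕ Fin l :=
    fun j => if j ∈ C then Sum.inr (β j) else Sum.inl j with hg
  have hgr : ∀ j, g j ∈ Set.range m := by
    intro j
    by_cases h : j ∈ C
    · have : β j ∈ B := by
        rw [hβ]; simp only [h, dif_pos]; exact (e ⟨j, h⟩).2
      rw [hB] at this
      simp only [Finset.mem_filter] at this
      simp [hg, h, this.2]
    · have : j ∈ A := by
        rw [hC] at h; simpa using h
      rw [hA] at this
      simp only [Finset.mem_filter] at this
      simp [hg, h, this.2]
  have hginj : Function.Injective g := by
    intro a b hab
    rw [hg] at hab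
    by_cases ha : a ∈ C <;> by_cases hb : b ∈ C <;> simp [ha, hb] at hab
    · have : (⟨a, ha⟩ : {x // x ∈ C}) = ⟨b, hb⟩ := e.injective (by
        apply Subtype.ext
        simpa [hβ, ha, hb] using hab)
      exact congrArg Subtype.val this
    · exact hab
  set σf : Fin l → Fin l := fun j => Function.invFun m (g j) with hσf
  have hmσ : ∀ j, m (σf j) = g j := fun j => Function.invFun_eq (hgr j)
  have hσinj : Function.Injective σf := by
    intro a b hab
    apply hginj
    rw [← hmσ a, ← hmσ b, hab]
  set σ : Equiv.Perm (Fin l) :=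
    Equiv.ofBijective σf (Finite.injective_iff_bijective.mp hσinj) with hσ
  have hperm : (ιMulti ℂ l (M := Fin l ⊕ Fin l → ℂ)) ((fun j => bv l (m j)) ∘ σ)
      = Equiv.Perm.sign σ • ιMulti ℂ l (fun j => bv l (m j)) :=
    AlternatingMap.map_perm _ _ _
  have hcomp : ((fun j => bv l (m j)) ∘ σ)
      = fun j => if j ∈ C then bv l (Sum.inr (β j)) else bv l (Sum.inl j) := by
    funext j
    have : m (σ j) = g j := hmσ j
    simp only [Function.comp_apply, this, hg]
    by_cases h : j ∈ C <;> simp [h]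
  rw [hcomp] at hperm
  have hk := key1 β C
  rw [hperm] at hk
  rcases Int.units_eq_one_or (Equiv.Perm.sign σ) with h | h <;> rw [h] at hk
  · simpa using hk
  · have : ιMulti ℂ l (fun j => bv l (m j))
        = -((-1 : ℤˣ) • ιMulti ℂ l (fun j => bv l (m j))) := by simp
    rw [this]
    exact Submodule.neg_mem _ hk

lemma key3 (hl : 1 ≤ l) (v : Fin l → (Fin l ⊕ Fin l → ℂ)) :
    ιMulti ℂ l v ∈ Submodule.span ℂ (WS l) := by
  classical
  have hv : v = fun j => ∑ x : Fin l ⊕ Fin l, v j x • bv l x := by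
    funext j y
    simp [bv, Pi.single_apply]
  rw [show (ιMulti ℂ l v : ExteriorAlgebra ℂ (Fin l ⊕ Fin l → ℂ))
    = (ιMulti ℂ l).toMultilinearMap v from rfl, hv]
  rw [MultilinearMap.map_sum]
  apply Submodule.sum_mem
  intro r _
  rw [MultilinearMap.map_smul_univ]
  by_cases hr : Function.Injective r
  · exact Submodule.smul_mem _ _ (key2 hl r hr)
  · have : (ιMulti ℂ l).toMultilinearMap (fun i => bv l (r i)) = 0 := by
      apply AlternatingMap.map_eq_zero_of_not_injective
      intro hinj
      exact hr fun a b hab => hinj (congrArg (bv l) hab)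
    rw [this, smul_zero]
    exact Submodule.zero_mem _

/-- for `ℓ ≥ 1`, the vectors `(e_1, M e_1) ∧ ⋯ ∧ (e_ℓ, M e_ℓ)` in
`Λ^ℓ ℂ^{2ℓ}`, as `M` ranges over the real `ℓ×ℓ` matrices, span `Λ^ℓ ℂ^{2ℓ}`.
Here `ℂ^{2ℓ}` is realized as `Fin ℓ ⊕ Fin ℓ → ℂ` and `(e_j, M e_j)` has first `ℓ`
coordinates `e_j` and last `ℓ` coordinates the `j`-th column of `M`. -/
theorem exterior_power_span (l : ℕ) (hl : 1 ≤ l) :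
    Submodule.span ℂ
        {w : ExteriorAlgebra ℂ (Fin l ⊕ Fin l → ℂ) |
          ∃ M : Matrix (Fin l) (Fin l) ℝ,
            w = ExteriorAlgebra.ιMulti ℂ l
              (fun j : Fin l =>
                Sum.elim (Pi.single j (1 : ℂ)) (fun a : Fin l => ((M a j : ℝ) : ℂ)))} =
      ⋀[ℂ]^l (Fin l ⊕ Fin l → ℂ) := by
  apply le_antisymm
  · rw [Submodule.span_le]
    rintro w ⟨M, rfl⟩
    exact ExteriorAlgebra.ιMulti_range ℂ l (Set.mem_range_self _)
  · rw [← ExteriorAlgebra.ιMulti_span_fixedDegree, Submodule.span_le]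
    rintro w ⟨v, rfl⟩
    exact key3 hl v

end
end

section
/- In sp₂(ℝ), let A₁ = E_{32} + E_{41}, A₂ = E_{14} + E_{23}, A₃ = E_{12} + E_{21} - E_{34} - E_{43}, and A₄ = E_{12} - E_{43} (where E_{ij} is the 4×4 matrix unit). Then A₁, A₂, A₃, A₄ together with the six commutators [A_i, A_j] for 1 ≤ i < j ≤ 4 form a set of 10 linearly independent elements of sp₂(ℝ); since dim sp₂(ℝ) = 10, these matrices span sp₂(ℝ). -/
open Matrix

/-- The standard symplectic form `J = [[0, I₂], [-I₂, 0]]` on `ℝ⁴`. -/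
def J4 : Matrix (Fin 4) (Fin 4) ℝ :=
  !![0, 0, 1, 0; 0, 0, 0, 1; -1, 0, 0, 0; 0, -1, 0, 0]

/-- The symplectic Lie algebra `sp₂(ℝ) = {X : Xᵗ J + J X = 0}` as a submodule of the
`4×4` real matrices. -/
def sp2 : Submodule ℝ (Matrix (Fin 4) (Fin 4) ℝ) where
  carrier := {X | Xᵀ * J4 + J4 * X = 0}
  add_mem' := by
    intro a b ha hb
    simp only [Set.mem_setOf_eq] at *
    rw [transpose_add, Matrix.add_mul, Matrix.mul_add, add_add_add_comm, ha, hb, add_zero]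
  zero_mem' := by simp
  smul_mem' := by
    intro c x hx
    simp only [Set.mem_setOf_eq] at *
    rw [transpose_smul, Matrix.smul_mul, Matrix.mul_smul, ← smul_add, hx, smul_zero]

/-- `A₁ = E₃₂ + E₄₁` (1-based matrix units). -/
def A₁ : Matrix (Fin 4) (Fin 4) ℝ := Matrix.single 2 1 1 + Matrix.single 3 0 1
/-- `A₂ = E₁₄ + E₂₃`. -/
def A₂ : Matrix (Fin 4) (Fin 4) ℝ := Matrix.single 0 3 1 + Matrix.single 1 2 1
/-- `A₃ = E₁₂ + E₂₁ - E₃₄ - E₄₃`. -/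
def A₃ : Matrix (Fin 4) (Fin 4) ℝ :=
  Matrix.single 0 1 1 + Matrix.single 1 0 1 - Matrix.single 2 3 1 - Matrix.single 3 2 1
/-- `A₄ = E₁₂ - E₄₃`. -/
def A₄ : Matrix (Fin 4) (Fin 4) ℝ := Matrix.single 0 1 1 - Matrix.single 3 2 1

/-- The commutator `[A,B] = AB - BA`. -/
def matComm (X Y : Matrix (Fin 4) (Fin 4) ℝ) : Matrix (Fin 4) (Fin 4) ℝ := X * Y - Y * X

/-- The family consisting of `A₁,…,A₄` and the six commutators `[A_i, A_j]`, `i < j`. -/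
def spFamily : Fin 10 → Matrix (Fin 4) (Fin 4) ℝ :=
  ![A₁, A₂, A₃, A₄, matComm A₁ A₂, matComm A₁ A₃, matComm A₁ A₄,
    matComm A₂ A₃, matComm A₂ A₄, matComm A₃ A₄]

lemma hA₁ : A₁ = !![0,0,0,0; 0,0,0,0; 0,1,0,0; 1,0,0,0] := by
  ext i j; fin_cases i <;> fin_cases j <;> simp [A₁, Matrix.single, vecHead, vecTail]
lemma hA₂ : A₂ = !![0,0,0,1; 0,0,1,0; 0,0,0,0; 0,0,0,0] := by
  ext i j; fin_cases i <;> fin_cases j <;> simp [A₂, Matrix.single, vecHead, vecTail]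
lemma hA₃ : A₃ = !![0,1,0,0; 1,0,0,0; 0,0,0,-1; 0,0,-1,0] := by
  ext i j; fin_cases i <;> fin_cases j <;> simp [A₃, Matrix.single, vecHead, vecTail]
lemma hA₄ : A₄ = !![0,1,0,0; 0,0,0,0; 0,0,0,0; 0,0,-1,0] := by
  ext i j; fin_cases i <;> fin_cases j <;> simp [A₄, Matrix.single, vecHead, vecTail]

lemma hC12 : matComm A₁ A₂ = !![-1,0,0,0; 0,-1,0,0; 0,0,1,0; 0,0,0,1] := by
  rw [matComm, hA₁, hA₂]; ext i j
  fin_cases i <;> fin_cases j <;> simp [Matrix.mul_apply, Fin.sum_univ_four, vecHead, vecTail] <;> norm_num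
lemma hC13 : matComm A₁ A₃ = !![0,0,0,0; 0,0,0,0; 2,0,0,0; 0,2,0,0] := by
  rw [matComm, hA₁, hA₃]; ext i j
  fin_cases i <;> fin_cases j <;> simp [Matrix.mul_apply, Fin.sum_univ_four, vecHead, vecTail] <;> norm_num
lemma hC14 : matComm A₁ A₄ = !![0,0,0,0; 0,0,0,0; 0,0,0,0; 0,2,0,0] := by
  rw [matComm, hA₁, hA₄]; ext i j
  fin_cases i <;> fin_cases j <;> simp [Matrix.mul_apply, Fin.sum_univ_four, vecHead, vecTail] <;> norm_num
lemma hC23 : matComm A₂ A₃ = !![0,0,-2,0; 0,0,0,-2; 0,0,0,0; 0,0,0,0] := by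
  rw [matComm, hA₂, hA₃]; ext i j
  fin_cases i <;> fin_cases j <;> simp [Matrix.mul_apply, Fin.sum_univ_four, vecHead, vecTail] <;> norm_num
lemma hC24 : matComm A₂ A₄ = !![0,0,-2,0; 0,0,0,0; 0,0,0,0; 0,0,0,0] := by
  rw [matComm, hA₂, hA₄]; ext i j
  fin_cases i <;> fin_cases j <;> simp [Matrix.mul_apply, Fin.sum_univ_four, vecHead, vecTail] <;> norm_num
lemma hC34 : matComm A₃ A₄ = !![-1,0,0,0; 0,1,0,0; 0,0,1,0; 0,0,0,-1] := by
  rw [matComm, hA₃, hA₄]; ext i j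
  fin_cases i <;> fin_cases j <;> simp [Matrix.mul_apply, Fin.sum_univ_four, vecHead, vecTail]

lemma hF : spFamily = ![
    !![0,0,0,0; 0,0,0,0; 0,1,0,0; 1,0,0,0],
    !![0,0,0,1; 0,0,1,0; 0,0,0,0; 0,0,0,0],
    !![0,1,0,0; 1,0,0,0; 0,0,0,-1; 0,0,-1,0],
    !![0,1,0,0; 0,0,0,0; 0,0,0,0; 0,0,-1,0],
    !![-1,0,0,0; 0,-1,0,0; 0,0,1,0; 0,0,0,1],
    !![0,0,0,0; 0,0,0,0; 2,0,0,0; 0,2,0,0],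
    !![0,0,0,0; 0,0,0,0; 0,0,0,0; 0,2,0,0],
    !![0,0,-2,0; 0,0,0,-2; 0,0,0,0; 0,0,0,0],
    !![0,0,-2,0; 0,0,0,0; 0,0,0,0; 0,0,0,0],
    !![-1,0,0,0; 0,1,0,0; 0,0,1,0; 0,0,0,-1]] := by
  funext k
  fin_cases k
  · exact hA₁
  · exact hA₂
  · exact hA₃
  · exact hA₄
  · exact hC12
  · exact hC13
  · exact hC14
  · exact hC23
  · exact hC24
  · exact hC34

lemma hS0 : spFamily 0 = !![0,0,0,0; 0,0,0,0; 0,1,0,0; 1,0,0,0] := hA₁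
lemma hS1 : spFamily 1 = !![0,0,0,1; 0,0,1,0; 0,0,0,0; 0,0,0,0] := hA₂
lemma hS2 : spFamily 2 = !![0,1,0,0; 1,0,0,0; 0,0,0,-1; 0,0,-1,0] := hA₃
lemma hS3 : spFamily 3 = !![0,1,0,0; 0,0,0,0; 0,0,0,0; 0,0,-1,0] := hA₄
lemma hS4 : spFamily 4 = !![-1,0,0,0; 0,-1,0,0; 0,0,1,0; 0,0,0,1] := hC12
lemma hS5 : spFamily 5 = !![0,0,0,0; 0,0,0,0; 2,0,0,0; 0,2,0,0] := hC13
lemma hS6 : spFamily 6 = !![0,0,0,0; 0,0,0,0; 0,0,0,0; 0,2,0,0] := hC14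
lemma hS7 : spFamily 7 = !![0,0,-2,0; 0,0,0,-2; 0,0,0,0; 0,0,0,0] := hC23
lemma hS8 : spFamily 8 = !![0,0,-2,0; 0,0,0,0; 0,0,0,0; 0,0,0,0] := hC24
lemma hS9 : spFamily 9 = !![-1,0,0,0; 0,1,0,0; 0,0,1,0; 0,0,0,-1] := hC34

lemma sum_univ_ten {β : Type*} [AddCommMonoid β] (f : Fin 10 → β) :
    ∑ i, f i = f 0 + f 1 + f 2 + f 3 + f 4 + f 5 + f 6 + f 7 + f 8 + f 9 := by
  rw [Fin.sum_univ_castSucc, Fin.sum_univ_castSucc, Fin.sum_univ_eight]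
  rfl

lemma mem_sp2 {X : Matrix (Fin 4) (Fin 4) ℝ} : X ∈ sp2 ↔ Xᵀ * J4 + J4 * X = 0 := Iff.rfl

lemma mem0 : spFamily 0 ∈ sp2 := by
  have h : spFamily (0 : Fin 10) = _ := hA₁
  rw [mem_sp2, h]
  ext a b
  fin_cases a <;> fin_cases b <;>
    simp [J4, Matrix.mul_apply, Fin.sum_univ_four, vecHead, vecTail]

lemma mem1 : spFamily 1 ∈ sp2 := by
  have h : spFamily (1 : Fin 10) = _ := hA₂
  rw [mem_sp2, h]
  ext a b
  fin_cases a <;> fin_cases b <;>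
    simp [J4, Matrix.mul_apply, Fin.sum_univ_four, vecHead, vecTail]

lemma mem2 : spFamily 2 ∈ sp2 := by
  have h : spFamily (2 : Fin 10) = _ := hA₃
  rw [mem_sp2, h]
  ext a b
  fin_cases a <;> fin_cases b <;>
    simp [J4, Matrix.mul_apply, Fin.sum_univ_four, vecHead, vecTail]

lemma mem3 : spFamily 3 ∈ sp2 := by
  have h : spFamily (3 : Fin 10) = _ := hA₄
  rw [mem_sp2, h]
  ext a b
  fin_cases a <;> fin_cases b <;>
    simp [J4, Matrix.mul_apply, Fin.sum_univ_four, vecHead, vecTail]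

lemma mem4 : spFamily 4 ∈ sp2 := by
  have h : spFamily (4 : Fin 10) = _ := hC12
  rw [mem_sp2, h]
  ext a b
  fin_cases a <;> fin_cases b <;>
    simp [J4, Matrix.mul_apply, Fin.sum_univ_four, vecHead, vecTail]

lemma mem5 : spFamily 5 ∈ sp2 := by
  have h : spFamily (5 : Fin 10) = _ := hC13
  rw [mem_sp2, h]
  ext a b
  fin_cases a <;> fin_cases b <;>
    simp [J4, Matrix.mul_apply, Fin.sum_univ_four, vecHead, vecTail]

lemma mem6 : spFamily 6 ∈ sp2 := by
  have h : spFamily (6 : Fin 10) = _ := hC14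
  rw [mem_sp2, h]
  ext a b
  fin_cases a <;> fin_cases b <;>
    simp [J4, Matrix.mul_apply, Fin.sum_univ_four, vecHead, vecTail]

lemma mem7 : spFamily 7 ∈ sp2 := by
  have h : spFamily (7 : Fin 10) = _ := hC23
  rw [mem_sp2, h]
  ext a b
  fin_cases a <;> fin_cases b <;>
    simp [J4, Matrix.mul_apply, Fin.sum_univ_four, vecHead, vecTail]

lemma mem8 : spFamily 8 ∈ sp2 := by
  have h : spFamily (8 : Fin 10) = _ := hC24
  rw [mem_sp2, h]
  ext a b
  fin_cases a <;> fin_cases b <;>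
    simp [J4, Matrix.mul_apply, Fin.sum_univ_four, vecHead, vecTail]

lemma mem9 : spFamily 9 ∈ sp2 := by
  have h : spFamily (9 : Fin 10) = _ := hC34
  rw [mem_sp2, h]
  ext a b
  fin_cases a <;> fin_cases b <;>
    simp [J4, Matrix.mul_apply, Fin.sum_univ_four, vecHead, vecTail]

lemma spFamily_mem : ∀ i, spFamily i ∈ sp2 := by
  intro i
  fin_cases i
  exacts [mem0, mem1, mem2, mem3, mem4, mem5, mem6, mem7, mem8, mem9]

set_option maxHeartbeats 2000000 in
/-- the four matrices `A₁,…,A₄` together with their six commutators are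
ten linearly independent elements of `sp₂(ℝ)`, and hence span `sp₂(ℝ)` (which has
dimension 10). -/
theorem spFamily_spans_sp2 :
    (∀ i, spFamily i ∈ sp2) ∧ LinearIndependent ℝ spFamily ∧
      Submodule.span ℝ (Set.range spFamily) = sp2 := by
  refine ⟨spFamily_mem, ?_, ?_⟩
  · rw [Fintype.linearIndependent_iff]
    intro g h
    have E : ∀ a b : Fin 4, _ = (0 : ℝ) := fun a b => congrFun (congrFun h a) b
    have e1 := E 2 1
    have e2 := E 0 3
    have e3 := E 1 0
    have e4 := E 0 1
    have e5 := E 0 0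
    have e6 := E 1 1
    have e7 := E 2 0
    have e8 := E 3 1
    have e9 := E 1 3
    have e10 := E 0 2
    simp [sum_univ_ten, hS0, hS1, hS2, hS3, hS4, hS5, hS6, hS7, hS8, hS9, vecHead, vecTail] at e1 e2 e3 e4 e5 e6 e7 e8 e9 e10
    intro i
    fin_cases i <;> simp <;> linarith
  · apply le_antisymm
    · rw [Submodule.span_le]
      rintro _ ⟨i, rfl⟩
      exact spFamily_mem i
    · intro X hX
      rw [mem_sp2] at hX
      have E : ∀ a b : Fin 4, (Xᵀ * J4 + J4 * X) a b = 0 := by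
        intro a b; rw [hX]; rfl
      have c1 := E 0 2
      have c2 := E 1 3
      have c3 := E 1 2
      have c4 := E 0 3
      have c5 := E 0 1
      have c6 := E 2 3
      simp [J4, Matrix.mul_apply, Matrix.add_apply, Matrix.vecMul, dotProduct,
        Fin.sum_univ_four, vecHead, vecTail] at c1 c2 c3 c4 c5 c6
      have hx : X = (X 2 1) • spFamily 0 + (X 0 3) • spFamily 1 + (X 1 0) • spFamily 2 +
          (X 0 1 - X 1 0) • spFamily 3 + (-(X 0 0 + X 1 1)/2) • spFamily 4 +
          (X 2 0/2) • spFamily 5 + ((X 3 1 - X 2 0)/2) • spFamily 6 +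
          (-(X 1 3)/2) • spFamily 7 + ((X 1 3 - X 0 2)/2) • spFamily 8 +
          ((X 1 1 - X 0 0)/2) • spFamily 9 := by
        rw [hS0, hS1, hS2, hS3, hS4, hS5, hS6, hS7, hS8, hS9]
        ext a b
        fin_cases a <;> fin_cases b <;>
          simp [vecHead, vecTail] <;> linarith
      rw [hx]
      have hm : ∀ k : Fin 10, spFamily k ∈ Submodule.span ℝ (Set.range spFamily) :=
        fun k => Submodule.subset_span (Set.mem_range_self k)
      exact add_mem (add_mem (add_mem (add_mem (add_mem (add_mem (add_mem (add_mem (add_mem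
        (Submodule.smul_mem _ _ (hm 0)) (Submodule.smul_mem _ _ (hm 1)))
        (Submodule.smul_mem _ _ (hm 2))) (Submodule.smul_mem _ _ (hm 3)))
        (Submodule.smul_mem _ _ (hm 4))) (Submodule.smul_mem _ _ (hm 5)))
        (Submodule.smul_mem _ _ (hm 6))) (Submodule.smul_mem _ _ (hm 7)))
        (Submodule.smul_mem _ _ (hm 8))) (Submodule.smul_mem _ _ (hm 9))
end
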